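/- arXiv:2402.16047 — 6 statements merged into one kernel-verified Lean document; each statement's English description precedes it below -/
import Mathlib

section
/- If a digraph D is a kernel-perfect orientation of a simple graph G and every vertex of D has outdegree at most k, then the list chromatic number (choosability) of G is at most k+1. -/
open SimpleGraph

variable {V : Type*}

/-- `S` is a kernel of the subdigraph of `D` induced on `A`: `S ⊆ A`, `S` is independent,
and every vertex of `A` outside `S` has an out-neighbor in `S`. -/
def IsKernelOn (D : V → V → Prop) (A S : Set V) : Prop :=
  S ⊆ A ∧ (∀ x ∈ S, ∀ y ∈ S, ¬ D x y) ∧ ∀ v ∈ A, v ∉ S → ∃ w ∈ S, D v w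

/-- A digraph is kernel-perfect if every induced subdigraph has a kernel. -/
def KernelPerfect (D : V → V → Prop) : Prop :=
  ∀ A : Set V, ∃ S : Set V, IsKernelOn D A S

/-- `D` is an orientation of the simple graph `G`. -/
def IsOrientation (G : SimpleGraph V) (D : V → V → Prop) : Prop :=
  (∀ x y, D x y → G.Adj x y) ∧ (∀ x y, G.Adj x y → (D x y ↔ ¬ D y x))

/-- `G` is `k`-choosable: every assignment of lists of size `k` admits a proper coloring
from the lists. -/
def Choosable (G : SimpleGraph V) (k : ℕ) : Prop :=
  ∀ L : V → Finset ℕ, (∀ v, (L v).card = k) →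
    ∃ c : V → ℕ, (∀ v, c v ∈ L v) ∧ ∀ ⦃x y⦄, G.Adj x y → c x ≠ c y

/-- The list chromatic number (choice number) of `G`. -/
noncomputable def choiceNumber (G : SimpleGraph V) : ℕ :=
  sInf {k | Choosable G k}

/-- The unitary Cayley graph on `ZMod n`: `x ~ y` iff `x - y` is a unit. -/
def unitaryCayley (n : ℕ) : SimpleGraph (ZMod n) where
  Adj x y := x ≠ y ∧ IsUnit (x - y)
  symm := by
    constructor
    rintro x y ⟨h1, h2⟩
    refine ⟨h1.symm, ?_⟩
    rw [show y - x = -(x - y) by ring]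
    exact h2.neg
  loopless := by constructor; rintro x ⟨h, _⟩; exact h rfl

open scoped Classical in
lemma aux_kernel_choose [Fintype V] (G : SimpleGraph V) (D : V → V → Prop)
    (horient : IsOrientation G D) (hkp : KernelPerfect D) :
    ∀ (n : ℕ) (W : Finset V), W.card = n → ∀ L : V → Finset ℕ,
      (∀ v ∈ W, (W.filter (fun w => D v w)).card < (L v).card) →
      ∃ c : V → ℕ, (∀ v ∈ W, c v ∈ L v) ∧
        ∀ x ∈ W, ∀ y ∈ W, G.Adj x y → c x ≠ c y := by
  intro n
  induction n using Nat.strong_induction_on with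
  | _ n IH =>
    intro W hWcard L hL
    rcases W.eq_empty_or_nonempty with rfl | ⟨v0, hv0⟩
    · exact ⟨fun _ => 0, by simp, by simp⟩
    · -- pick a color α in L v0
      have hLv0 : 0 < (L v0).card := lt_of_le_of_lt (Nat.zero_le _) (hL v0 hv0)
      obtain ⟨α, hα⟩ := Finset.card_pos.mp hLv0
      set A : Set V := {v | v ∈ W ∧ α ∈ L v} with hA
      obtain ⟨S, hSA, hSind, hSker⟩ := hkp A
      -- S is nonempty
      have hv0A : v0 ∈ A := ⟨hv0, hα⟩
      have hSne : ∃ s, s ∈ S := by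
        by_cases h : v0 ∈ S
        · exact ⟨v0, h⟩
        · obtain ⟨w, hw, _⟩ := hSker v0 hv0A h
          exact ⟨w, hw⟩
      obtain ⟨s0, hs0⟩ := hSne
      set W' : Finset V := W.filter (fun v => v ∉ S) with hW'
      set L' : V → Finset ℕ := fun v => (L v).erase α with hL'
      have hSsubW : ∀ v ∈ S, v ∈ W := fun v hv => (hSA hv).1
      have hW'sub : W' ⊆ W := Finset.filter_subset _ _
      have hW'card : W'.card < n := by
        rw [← hWcard]
        apply Finset.card_lt_card
        refine ⟨hW'sub, fun hsub => ?_⟩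
        have := hsub (hSsubW s0 hs0)
        simp [hW'] at this
        exact this.2 hs0
      -- degree condition for W'
      have hL2 : ∀ v ∈ W', (W'.filter (fun w => D v w)).card < (L' v).card := by
        intro v hv
        have hvW : v ∈ W := hW'sub hv
        have hvS : v ∉ S := (Finset.mem_filter.mp hv).2
        by_cases hαv : α ∈ L v
        · obtain ⟨w, hwS, hDvw⟩ := hSker v ⟨hvW, hαv⟩ hvS
          have hwW : w ∈ W.filter (fun w => D v w) :=
            Finset.mem_filter.mpr ⟨hSsubW w hwS, hDvw⟩
          have hwW' : w ∉ W'.filter (fun w => D v w) := by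
            simp [hW']
            intro _ h; exact absurd hwS h
          have hsub2 : insert w (W'.filter (fun w => D v w)) ⊆
              W.filter (fun w => D v w) := by
            intro x hx
            rcases Finset.mem_insert.mp hx with rfl | hx
            · exact hwW
            · simp only [Finset.mem_filter, hW'] at hx ⊢
              exact ⟨hx.1.1, hx.2⟩
          have h1 : (W'.filter (fun w => D v w)).card + 1 ≤
              (W.filter (fun w => D v w)).card := by
            have := Finset.card_le_card hsub2
            rwa [Finset.card_insert_of_notMem hwW'] at this
          have h2 := hL v hvW
          have h3 : (L' v).card = (L v).card - 1 := Finset.card_erase_of_mem hαv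
          have h4 : 0 < (L v).card := Finset.card_pos.mpr ⟨α, hαv⟩
          omega
        · have h3 : L' v = L v := Finset.erase_eq_of_notMem hαv
          have hsub2 : W'.filter (fun w => D v w) ⊆ W.filter (fun w => D v w) :=
            Finset.filter_subset_filter _ hW'sub
          calc (W'.filter (fun w => D v w)).card
              ≤ (W.filter (fun w => D v w)).card := Finset.card_le_card hsub2
            _ < (L v).card := hL v hvW
            _ = (L' v).card := by rw [h3]
      obtain ⟨c', hc'mem, hc'prop⟩ := IH W'.card hW'card W' rfl L' hL2
      refine ⟨fun v => if v ∈ S then α else c' v, ?_, ?_⟩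
      · intro v hv
        by_cases hvS : v ∈ S
        · simp only [if_pos hvS]
          exact (hSA hvS).2
        · simp only [if_neg hvS]
          have hvW' : v ∈ W' := Finset.mem_filter.mpr ⟨hv, hvS⟩
          exact Finset.erase_subset _ _ (hc'mem v hvW')
      · intro x hx y hy hadj
        have hne : ∀ v ∈ W', c' v ≠ α := by
          intro v hv
          exact Finset.ne_of_mem_erase (hc'mem v hv)
        by_cases hxS : x ∈ S <;> by_cases hyS : y ∈ S
        · exfalso
          by_cases hD : D x y
          · exact hSind x hxS y hyS hD
          · exact hSind y hyS x hxS ((horient.2 y x hadj.symm).mpr hD)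
        · simp only [if_pos hxS, if_neg hyS]
          exact fun h => hne y (Finset.mem_filter.mpr ⟨hy, hyS⟩) h.symm
        · simp only [if_neg hxS, if_pos hyS]
          exact hne x (Finset.mem_filter.mpr ⟨hx, hxS⟩)
        · simp only [if_neg hxS, if_neg hyS]
          exact hc'prop x (Finset.mem_filter.mpr ⟨hx, hxS⟩)
            y (Finset.mem_filter.mpr ⟨hy, hyS⟩) hadj

/-- a kernel-perfect orientation with outdegree at most `k`
gives `ch(G) ≤ k + 1`. -/
theorem stmt_0 [Fintype V] (G : SimpleGraph V) (D : V → V → Prop) (k : ℕ)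
    (horient : IsOrientation G D) (hkp : KernelPerfect D)
    (hdeg : ∀ v : V, {w | D v w}.ncard ≤ k) :
    choiceNumber G ≤ k + 1 := by
  classical
  apply Nat.sInf_le
  intro L hLcard
  have hdeg' : ∀ v ∈ (Finset.univ : Finset V),
      (Finset.univ.filter (fun w => D v w)).card < (L v).card := by
    intro v _
    have h1 : (Finset.univ.filter (fun w => D v w)).card = {w | D v w}.ncard := by
      rw [Set.ncard_eq_toFinset_card']
      congr 1
      ext w
      simp
    rw [hLcard v, h1]
    exact lt_of_le_of_lt (hdeg v) (Nat.lt_succ_self k)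
  obtain ⟨c, hc1, hc2⟩ := aux_kernel_choose G D horient hkp
    (Finset.univ.card) Finset.univ rfl L hdeg'
  exact ⟨c, fun v => hc1 v (Finset.mem_univ v),
    fun x y hadj => hc2 x (Finset.mem_univ x) y (Finset.mem_univ y) hadj⟩
end

section
/- Let n be an odd positive integer and let G be the unitary Cayley graph on Z/nZ (vertices are residues mod n, with x adjacent to y iff gcd(x-y, n) = 1). Then the clique number of G equals the least prime divisor p of n. -/
open SimpleGraph

variable {V : Type*}

/-- for odd `n > 1`, the clique number of the unitary Cayley graph on
`ZMod n` is the least prime divisor of `n`. -/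
theorem stmt_4 (n : ℕ) (hn : 1 < n) (hodd : Odd n) :
    (unitaryCayley n).cliqueNum = n.minFac := by
  have hn0 : NeZero n := ⟨by omega⟩
  set p := n.minFac with hp
  have hpp : p.Prime := Nat.minFac_prime (by omega)
  have hpn : p ∣ n := Nat.minFac_dvd n
  have hpos : 0 < p := hpp.pos
  have hple : p ≤ n := Nat.le_of_dvd (by omega) hpn
  -- coprimality of small positive numbers with n
  have hcop : ∀ k : ℕ, 0 < k → k < p → Nat.Coprime k n := by
    intro k hk hkp
    by_contra h
    have h1 : 1 < Nat.gcd k n := by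
      have h0 : 0 < Nat.gcd k n := Nat.gcd_pos_of_pos_left n hk
      have h2 : Nat.gcd k n ≠ 1 := h
      omega
    set q := (Nat.gcd k n).minFac with hq
    have hqp : q.Prime := Nat.minFac_prime (by omega)
    have hqk : q ∣ k := (Nat.minFac_dvd _).trans (Nat.gcd_dvd_left _ _)
    have hqn : q ∣ n := (Nat.minFac_dvd _).trans (Nat.gcd_dvd_right _ _)
    have : p ≤ q := Nat.minFac_le_of_dvd hqp.two_le hqn
    have : q ≤ k := Nat.le_of_dvd hk hqk
    omega
  apply le_antisymm
  · -- upper bound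
    obtain ⟨s, hs⟩ := (unitaryCayley n).exists_isNClique_cliqueNum
    rw [← hs.card_eq]
    haveI : Fact p.Prime := ⟨hpp⟩
    have hinj : Set.InjOn (ZMod.castHom hpn (ZMod p)) s := by
      intro x hx y hy hxy
      by_contra hne
      have hadj := hs.isClique hx hy hne
      have hu : IsUnit ((ZMod.castHom hpn (ZMod p)) (x - y)) :=
        hadj.2.map (ZMod.castHom hpn (ZMod p))
      rw [map_sub, hxy, sub_self] at hu
      exact hu.ne_zero rfl
    calc s.card = (s.image (ZMod.castHom hpn (ZMod p))).card :=
          (Finset.card_image_of_injOn hinj).symm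
      _ ≤ Fintype.card (ZMod p) := Finset.card_le_univ _
      _ = p := ZMod.card p
  · -- lower bound: {0,...,p-1} is a clique
    have key : ∀ i j : ℕ, i < j → j < p → (unitaryCayley n).Adj (i : ZMod n) (j : ZMod n) := by
      intro i j hij hjp
      have hco : Nat.Coprime (j - i) n := hcop _ (by omega) (by omega)
      have hu : IsUnit ((j - i : ℕ) : ZMod n) := (ZMod.isUnit_iff_coprime _ n).mpr hco
      have hcast : ((j - i : ℕ) : ZMod n) = (j : ZMod n) - (i : ZMod n) := by
        push_cast [Nat.cast_sub hij.le]; ring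
      rw [hcast] at hu
      have hne : (i : ZMod n) ≠ (j : ZMod n) := by
        intro h
        have := ZMod.val_cast_of_lt (show i < n by omega)
        have := ZMod.val_cast_of_lt (show j < n by omega)
        have : i = j := by
          have h' := congrArg ZMod.val h
          omega
        omega
      exact ⟨hne, by rwa [show (i : ZMod n) - j = -((j : ZMod n) - i) by ring, IsUnit.neg_iff]⟩
    have hinj2 : Set.InjOn (fun i : ℕ => (i : ZMod n)) (Finset.range p) := by
      intro i hi j hj hij
      simp only [Finset.coe_range, Set.mem_Iio] at hi hj
      have h' := congrArg ZMod.val hij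
      simp only at h'
      rw [ZMod.val_cast_of_lt (by omega), ZMod.val_cast_of_lt (by omega)] at h'
      exact h'
    have hclique : (unitaryCayley n).IsClique ((Finset.range p).image (fun i : ℕ => (i : ZMod n))) := by
      intro x hx y hy hxy
      simp only [Finset.coe_image, Finset.coe_range, Set.mem_image, Set.mem_Iio] at hx hy
      obtain ⟨i, hi, rfl⟩ := hx
      obtain ⟨j, hj, rfl⟩ := hy
      rcases Nat.lt_trichotomy i j with h | h | h
      · exact key i j h hj
      · exact absurd (by rw [h]) hxy
      · exact (key j i h hi).symm
    have hcard : ((Finset.range p).image (fun i : ℕ => (i : ZMod n))).card = p := by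
      rw [Finset.card_image_of_injOn hinj2, Finset.card_range]
    calc p = ((Finset.range p).image (fun i : ℕ => (i : ZMod n))).card := hcard.symm
      _ ≤ (unitaryCayley n).cliqueNum := hclique.card_le_cliqueNum
end

section
/- Let n be odd with least prime divisor p. The clique number of the complement of the unitary Cayley graph on Z/nZ equals n/p. -/
open SimpleGraph

variable {V : Type*}

open Finset in
lemma coprime_of_lt_minFac' {n d : ℕ} (hd : 0 < d) (hlt : d < n.minFac) : Nat.Coprime d n := by
  have hg1 : Nat.gcd d n ∣ d := Nat.gcd_dvd_left d n
  have hg2 : Nat.gcd d n ∣ n := Nat.gcd_dvd_right d n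
  have hgpos : 0 < Nat.gcd d n := Nat.gcd_pos_of_pos_left n hd
  by_contra h
  have h2 : 2 ≤ Nat.gcd d n := by
    rcases Nat.lt_or_ge (Nat.gcd d n) 2 with h' | h'
    · exact absurd (Nat.coprime_iff_gcd_eq_one.mpr (by omega)) h
    · exact h'
  have := Nat.minFac_le_of_dvd h2 hg2
  have := Nat.le_of_dvd hd hg1
  omega

open Finset in
/-- the clique number of the complement of the unitary Cayley graph
on `ZMod n` (`n` odd) equals `n / p` where `p` is the least prime divisor of `n`. -/
theorem stmt_7 (n : ℕ) (hn : 1 < n) (hodd : Odd n) :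
    ((unitaryCayley n)ᶜ).cliqueNum = n / n.minFac := by
  haveI : NeZero n := ⟨by omega⟩
  haveI : Fact (1 < n) := ⟨hn⟩
  set p := n.minFac with hp
  have hpdvd : p ∣ n := Nat.minFac_dvd n
  have hp2 : 2 ≤ p := (Nat.minFac_prime (by omega)).two_le
  have hpn : p ≤ n := Nat.minFac_le (by omega)
  have hunit : ∀ d : ℕ, 0 < d → d < p → IsUnit ((d : ZMod n)) := fun d h1 h2 =>
    (ZMod.isUnit_iff_coprime d n).mpr (coprime_of_lt_minFac' h1 h2)
  have hnonunit : ∀ z : ZMod n, p ∣ z.val → ¬ IsUnit z := by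
    intro z hdvd hu
    rw [← ZMod.natCast_zmod_val z, ZMod.isUnit_iff_coprime] at hu
    have h1 : p ∣ Nat.gcd z.val n := Nat.dvd_gcd hdvd hpdvd
    rw [Nat.coprime_iff_gcd_eq_one] at hu
    rw [hu] at h1
    exact absurd (Nat.le_of_dvd one_pos h1) (by omega)
  have hsub : ∀ x y : ZMod n, p ∣ x.val → p ∣ y.val → p ∣ (x - y).val := by
    intro x y hx hy
    have hcast : ∀ z : ZMod n, ((z.val : ZMod p)) = ZMod.castHom hpdvd (ZMod p) z := by
      intro z; rw [ZMod.castHom_apply, ZMod.natCast_val]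
    rw [← ZMod.natCast_eq_zero_iff] at hx hy ⊢
    rw [hcast] at hx hy ⊢
    rw [map_sub, hx, hy, sub_zero]
  apply le_antisymm
  · -- upper bound
    apply csSup_le ⟨0, Set.mem_setOf.mpr ⟨∅, isNClique_empty.mpr rfl⟩⟩
    rintro m ⟨t, ht⟩
    rw [Nat.le_div_iff_mul_le (by omega : 0 < p), ← ht.2]
    have hinj : Set.InjOn (fun q : ZMod n × ℕ => q.1 - (q.2 : ZMod n))
        ↑(t ×ˢ Finset.range p) := by
      rintro ⟨x, k⟩ hxk ⟨y, j⟩ hyj heq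
      simp only [Finset.mem_coe, Finset.mem_product, Finset.mem_range] at hxk hyj
      obtain ⟨hx, hk⟩ := hxk; obtain ⟨hy, hj⟩ := hyj
      simp only at heq
      have hxy : x - y = (k : ZMod n) - (j : ZMod n) := by linear_combination heq
      have hkj : k = j := by
        by_contra hne
        have hu : IsUnit ((k : ZMod n) - (j : ZMod n)) := by
          rcases Nat.lt_or_ge k j with h | h
          · have he : ((k : ZMod n) - j) = -(((j - k : ℕ) : ZMod n)) := by
              rw [Nat.cast_sub h.le]; ring
            rw [he]
            exact (hunit _ (by omega) (by omega)).neg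
          · have hkj' : j < k := by omega
            rw [show ((k : ZMod n) - j) = (((k - j : ℕ) : ZMod n)) from by
              rw [Nat.cast_sub hkj'.le]]
            exact hunit _ (by omega) (by omega)
        have hxyne : x ≠ y := by
          intro h; subst h
          rw [sub_self] at hxy
          rw [← hxy] at hu
          exact not_isUnit_zero hu
        have hadj := ht.1 hx hy hxyne
        rw [compl_adj] at hadj
        exact hadj.2 ⟨hxyne, hxy ▸ hu⟩
      subst hkj
      have hxe : x = y := by
        rw [sub_self] at hxy; exact sub_eq_zero.mp hxy
      simp [hxe]
    have hcard := Finset.card_le_card_of_injOn (t := (Finset.univ : Finset (ZMod n))) _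
      (fun _ _ => Finset.mem_univ _) hinj
    rw [Finset.card_product, Finset.card_range, Finset.card_univ, ZMod.card] at hcard
    exact hcard
  · -- lower bound
    have hbdd : BddAbove {m | ∃ s, ((unitaryCayley n)ᶜ).IsNClique m s} := by
      refine ⟨Fintype.card (ZMod n), ?_⟩
      rintro m ⟨s, hs⟩
      rw [← hs.2, ← Finset.card_univ]
      exact Finset.card_le_univ s
    apply le_csSup hbdd
    refine Set.mem_setOf.mpr ⟨Finset.univ.filter (fun x : ZMod n => p ∣ x.val), ?_, ?_⟩
    · intro x hx y hy hxy
      simp only [Finset.coe_filter, Set.mem_setOf_eq] at hx hy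
      rw [compl_adj]
      exact ⟨hxy, fun hadj => hnonunit (x - y) (hsub x y hx.2 hy.2) hadj.2⟩
    · rw [← Finset.card_range (n / p)]
      have hnp : p * (n / p) = n := Nat.mul_div_cancel' hpdvd
      apply Finset.card_bij' (fun x _ => x.val / p) (fun k _ => ((p * k : ℕ) : ZMod n))
      · intro x hx
        simp only [mem_filter] at hx
        rw [mem_range]
        exact Nat.div_lt_div_of_lt_of_dvd hpdvd (ZMod.val_lt x)
      · intro k hk
        rw [mem_range] at hk
        have hlt : p * k < n := by
          have h1 := Nat.mul_le_mul_left p (show k + 1 ≤ n / p from hk)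
          have h2 : p * (k + 1) = p * k + p := by ring
          omega
        rw [mem_filter]
        exact ⟨Finset.mem_univ _, by rw [ZMod.val_cast_of_lt hlt]; exact Dvd.intro k rfl⟩
      · intro x hx
        simp only [mem_filter] at hx
        rw [Nat.mul_div_cancel' hx.2, ZMod.natCast_zmod_val]
      · intro k hk
        rw [mem_range] at hk
        have hlt : p * k < n := by
          have h1 := Nat.mul_le_mul_left p (show k + 1 ≤ n / p from hk)
          have h2 : p * (k + 1) = p * k + p := by ring
          omega
        rw [ZMod.val_cast_of_lt hlt, Nat.mul_div_cancel_left _ (by omega : 0 < p)]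
end

section
/- Let n be odd with least prime divisor p, and let G be the complement of the unitary Cayley graph on Z/nZ. Then the chromatic number of G equals n/p. -/
open SimpleGraph

variable {V : Type*}

/-- the chromatic number of the complement of the unitary Cayley graph
on `ZMod n` (`n` odd) equals `n / p`. -/
theorem stmt_9 (n : ℕ) (hn : 1 < n) (hodd : Odd n) :
    ((unitaryCayley n)ᶜ).chromaticNumber = ((n / n.minFac : ℕ) : ℕ∞) := by
  haveI : NeZero n := ⟨by omega⟩
  set p := n.minFac with hp
  have hpprime : p.Prime := Nat.minFac_prime (by omega)
  have hpdvd : p ∣ n := Nat.minFac_dvd n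
  have hppos : 0 < p := hpprime.pos
  have hmul : p * (n / p) = n := Nat.mul_div_cancel' hpdvd
  -- complement adjacency
  have hadj : ∀ x y : ZMod n, ((unitaryCayley n)ᶜ).Adj x y ↔ x ≠ y ∧ ¬ IsUnit (x - y) := by
    intro x y
    constructor
    · rintro ⟨hne, hnu⟩
      exact ⟨hne, fun hu => hnu ⟨hne, hu⟩⟩
    · rintro ⟨hne, hnu⟩
      exact ⟨hne, fun h => hnu h.2⟩
  apply le_antisymm
  · -- upper bound: coloring x ↦ x.val / p
    have hcol : ((unitaryCayley n)ᶜ).Colorable (n / p) := by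
      refine ⟨⟨fun x => ⟨x.val / p, ?_⟩, ?_⟩⟩
      · exact Nat.div_lt_div_of_lt_of_dvd hpdvd (ZMod.val_lt x)
      · have key : ∀ x y : ZMod n, x ≠ y → ¬ IsUnit (x - y) →
            x.val / p = y.val / p → y.val ≤ x.val → False := by
          intro x y hne hnu heq hle
          apply hnu
          have hvne : x.val ≠ y.val := fun h => hne (ZMod.val_injective n h)
          have hval : (x - y).val = x.val - y.val := ZMod.val_sub hle
          rw [← ZMod.natCast_zmod_val (x - y), ZMod.isUnit_iff_coprime, hval]
          -- x.val - y.val < p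
          set d := x.val - y.val with hd
          have hdpos : 0 < d := by omega
          have hdlt : d < p := by
            have h1 : x.val < p * (y.val / p + 1) := by
              rw [← heq]; exact Nat.lt_mul_div_succ _ hppos
            have h2 : y.val / p * p ≤ y.val := Nat.div_mul_le_self _ _
            have h3 : p * (y.val / p + 1) = y.val / p * p + p := by ring
            omega
          -- coprime since every prime divisor of n is ≥ p > d
          by_contra hnc
          have hg0 : Nat.gcd d n ≠ 0 := by
            intro h
            rw [Nat.gcd_eq_zero_iff] at h
            omega
          have hgcd : 1 < Nat.gcd d n := by
            rcases eq_or_ne (Nat.gcd d n) 1 with h | h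
            · exact absurd h hnc
            · omega
          set q := (Nat.gcd d n).minFac with hq
          have hqprime : q.Prime := Nat.minFac_prime (by omega)
          have hqd : q ∣ d := (Nat.minFac_dvd _).trans (Nat.gcd_dvd_left _ _)
          have hqn : q ∣ n := (Nat.minFac_dvd _).trans (Nat.gcd_dvd_right _ _)
          have hpq : p ≤ q := Nat.minFac_le_of_dvd hqprime.two_le hqn
          have := Nat.le_of_dvd hdpos hqd
          omega
        intro x y hxy
        rw [hadj] at hxy
        obtain ⟨hne, hnu⟩ := hxy
        intro heqf
        rw [Fin.mk.injEq] at heqf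
        rcases le_total y.val x.val with hle | hle
        · exact key x y hne hnu heqf hle
        · exact key y x hne.symm
            (fun hu => hnu (by rwa [show x - y = -(y-x) by ring, IsUnit.neg_iff])) heqf.symm hle
    exact hcol.chromaticNumber_le
  · -- lower bound: clique of multiples of p
    have hclique : ((unitaryCayley n)ᶜ).IsClique
        (((Finset.range (n / p)).image (fun k => ((p * k : ℕ) : ZMod n))) : Finset (ZMod n)) := by
      intro a ha b hb hab
      simp only [Finset.coe_image, Set.mem_image, Finset.mem_coe, Finset.mem_range] at ha hb
      obtain ⟨i, hi, rfl⟩ := ha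
      obtain ⟨j, hj, rfl⟩ := hb
      rw [hadj]
      refine ⟨hab, ?_⟩
      rw [← ZMod.natCast_zmod_val (((p * i : ℕ) : ZMod n) - ((p * j : ℕ) : ZMod n)),
        ZMod.isUnit_iff_coprime]
      intro hcop
      have hdvd : p ∣ (((p * i : ℕ) : ZMod n) - ((p * j : ℕ) : ZMod n)).val := by
        rw [← ZMod.natCast_eq_zero_iff]
        rw [ZMod.natCast_val, ← ZMod.castHom_apply (h := hpdvd), map_sub, map_natCast, map_natCast]
        push_cast
        simp [ZMod.natCast_self]
      have hdg : p ∣ Nat.gcd (((p * i : ℕ) : ZMod n) - ((p * j : ℕ) : ZMod n)).val n :=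
        Nat.dvd_gcd hdvd hpdvd
      rw [Nat.Coprime] at hcop
      rw [hcop, Nat.dvd_one] at hdg
      have := hpprime.two_le
      omega
    have hcard : (((Finset.range (n / p)).image (fun k => ((p * k : ℕ) : ZMod n)))).card = n / p := by
      rw [Finset.card_image_of_injOn, Finset.card_range]
      intro i hi j hj hij
      simp only [Finset.coe_range, Set.mem_Iio] at hi hj
      have h1 : p * i < n := by
        calc p * i < p * (n / p) := (Nat.mul_lt_mul_left hppos).mpr hi
        _ = n := hmul
      have h2 : p * j < n := by
        calc p * j < p * (n / p) := (Nat.mul_lt_mul_left hppos).mpr hj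
        _ = n := hmul
      have := ZMod.val_cast_of_lt h1
      have := ZMod.val_cast_of_lt h2
      have : p * i = p * j := by
        have := congrArg (ZMod.val) hij
        rwa [ZMod.val_cast_of_lt h1, ZMod.val_cast_of_lt h2] at this
      exact Nat.eq_of_mul_eq_mul_left hppos this
    have := hclique.card_le_chromaticNumber
    rwa [hcard] at this
end

section
/- Let n = p^a or n = p^a q^b with p < q odd primes. Then the unitary Cayley graph on Z/nZ is a perfect graph. -/
open SimpleGraph

variable {V : Type*}

/-- A graph is perfect if every induced subgraph has chromatic number equal to its
clique number. -/
def IsPerfect (G : SimpleGraph V) : Prop :=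
  ∀ A : Set V,
    (SimpleGraph.induce A G).chromaticNumber = ((SimpleGraph.induce A G).cliqueNum : ℕ∞)




variable {α β : Type*} [DecidableEq α] [DecidableEq β]

/-- column-neighborhood of a set of rows -/
private def NB (T : Finset (α × β)) (R : Finset α) : Finset β :=
  (T.filter (fun e => e.1 ∈ R)).image Prod.snd

private lemma mem_NB {T : Finset (α × β)} {R : Finset α} {b : β} :
    b ∈ NB T R ↔ ∃ e ∈ T, e.1 ∈ R ∧ e.2 = b := by
  simp only [NB, Finset.mem_image, Finset.mem_filter]
  tauto

theorem konig_cover_matching (T : Finset (α × β)) :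
    ∃ (C : Finset (α ⊕ β)) (M : Finset (α × β)),
      (∀ e ∈ T, Sum.inl e.1 ∈ C ∨ Sum.inr e.2 ∈ C) ∧ M ⊆ T ∧
      (∀ e ∈ M, ∀ f ∈ M, e.1 = f.1 → e = f) ∧
      (∀ e ∈ M, ∀ f ∈ M, e.2 = f.2 → e = f) ∧
      C.card ≤ M.card := by
  classical
  set X : Finset α := T.image Prod.fst with hX
  obtain ⟨R, hRX, hRmax⟩ := X.powerset.exists_max_image
    (fun R => (R.card : ℤ) - ((NB T R).card : ℤ)) ⟨∅, by simp⟩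
  rw [Finset.mem_powerset] at hRX
  -- Hall 1 : match rows of X \ R to columns outside NB T R
  have hall1 : ∀ s : Finset {a // a ∈ X \ R},
      s.card ≤ (s.biUnion (fun a =>
        ((T.filter (fun e => e.1 = a.1)).image Prod.snd) \ NB T R)).card := by
    intro s
    set S : Finset α := s.image Subtype.val with hS
    have hcardS : S.card = s.card := Finset.card_image_of_injective _ Subtype.val_injective
    have hSsub : S ⊆ X \ R := by
      intro a ha; rw [hS, Finset.mem_image] at ha; obtain ⟨x, hx, rfl⟩ := ha; exact x.2
    have hdisj : Disjoint R S := by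
      refine Finset.disjoint_left.mpr fun a ha hmem => ?_
      exact (Finset.mem_sdiff.mp (hSsub hmem)).2 ha
    have hsub2 : NB T (R ∪ S) ⊆ NB T R ∪ (s.biUnion (fun a =>
        ((T.filter (fun e => e.1 = a.1)).image Prod.snd) \ NB T R)) := by
      intro b hb
      obtain ⟨e, heT, he1, he2⟩ := mem_NB.mp hb
      by_cases hbR : b ∈ NB T R
      · exact Finset.mem_union_left _ hbR
      rcases Finset.mem_union.mp he1 with h1 | h1
      · exact absurd (mem_NB.mpr ⟨e, heT, h1, he2⟩) hbR
      · rw [hS, Finset.mem_image] at h1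
        obtain ⟨x, hx, hxe⟩ := h1
        refine Finset.mem_union_right _ (Finset.mem_biUnion.mpr ⟨x, hx, ?_⟩)
        refine Finset.mem_sdiff.mpr ⟨?_, hbR⟩
        exact Finset.mem_image.mpr ⟨e, Finset.mem_filter.mpr ⟨heT, hxe.symm⟩, he2⟩
    have hmax := hRmax (R ∪ S) (Finset.mem_powerset.mpr
      (Finset.union_subset hRX (hSsub.trans (Finset.sdiff_subset))))
    have hcardU : (R ∪ S).card = R.card + S.card := Finset.card_union_of_disjoint hdisj
    have h2 := Finset.card_le_card hsub2
    have h3 := Finset.card_union_le (NB T R) (s.biUnion (fun a =>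
        ((T.filter (fun e => e.1 = a.1)).image Prod.snd) \ NB T R))
    simp only [hcardU] at hmax
    omega
  obtain ⟨f1, hf1inj, hf1mem⟩ :=
    (Finset.all_card_le_biUnion_card_iff_exists_injective _).mp hall1
  -- Hall 2 : match columns of NB T R to rows inside R
  have hall2 : ∀ s : Finset {b // b ∈ NB T R},
      s.card ≤ (s.biUnion (fun b =>
        (T.filter (fun e => e.2 = b.1 ∧ e.1 ∈ R)).image Prod.fst)).card := by
    intro s
    set S : Finset β := s.image Subtype.val with hS
    set W : Finset α := s.biUnion (fun b =>
        (T.filter (fun e => e.2 = b.1 ∧ e.1 ∈ R)).image Prod.fst) with hW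
    have hcardS : S.card = s.card := Finset.card_image_of_injective _ Subtype.val_injective
    have hSsub : S ⊆ NB T R := by
      intro b hb; rw [hS, Finset.mem_image] at hb; obtain ⟨x, hx, rfl⟩ := hb; exact x.2
    have hWR : W ⊆ R := by
      intro a ha
      rw [hW, Finset.mem_biUnion] at ha
      obtain ⟨b, _, hb⟩ := ha
      rw [Finset.mem_image] at hb
      obtain ⟨e, he, rfl⟩ := hb
      exact (Finset.mem_filter.mp he).2.2
    have hsub2 : NB T (R \ W) ⊆ NB T R \ S := by
      intro b hb
      obtain ⟨e, heT, he1, he2⟩ := mem_NB.mp hb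
      rw [Finset.mem_sdiff] at he1
      refine Finset.mem_sdiff.mpr ⟨mem_NB.mpr ⟨e, heT, he1.1, he2⟩, fun hbS => ?_⟩
      rw [hS, Finset.mem_image] at hbS
      obtain ⟨x, hx, hxb⟩ := hbS
      exact he1.2 (Finset.mem_biUnion.mpr ⟨x, hx, Finset.mem_image.mpr
        ⟨e, Finset.mem_filter.mpr ⟨heT, by rw [hxb]; exact he2, he1.1⟩, rfl⟩⟩)
    have hmax := hRmax (R \ W) (Finset.mem_powerset.mpr ((Finset.sdiff_subset).trans hRX))
    have hcardRW : (R \ W).card = R.card - W.card := Finset.card_sdiff_of_subset hWR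
    have hWle : W.card ≤ R.card := Finset.card_le_card hWR
    have h2 := Finset.card_le_card hsub2
    have h3 : (NB T R \ S).card = (NB T R).card - S.card := Finset.card_sdiff_of_subset hSsub
    have h4 : S.card ≤ (NB T R).card := Finset.card_le_card hSsub
    simp only [hcardRW, h3] at hmax h2
    omega
  obtain ⟨f2, hf2inj, hf2mem⟩ :=
    (Finset.all_card_le_biUnion_card_iff_exists_injective _).mp hall2
  -- assemble
  set M1 : Finset (α × β) := (X \ R).attach.image (fun a => (a.1, f1 a)) with hM1
  set M2 : Finset (α × β) := (NB T R).attach.image (fun b => (f2 b, b.1)) with hM2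
  have hM1spec : ∀ e ∈ M1, e.1 ∈ X \ R ∧ e ∈ T ∧ e.2 ∉ NB T R := by
    intro e he
    rw [hM1, Finset.mem_image] at he
    obtain ⟨a, _, rfl⟩ := he
    have h := hf1mem a
    rw [Finset.mem_sdiff] at h
    obtain ⟨hmem, hnot⟩ := h
    rw [Finset.mem_image] at hmem
    obtain ⟨e', he', he'2⟩ := hmem
    rw [Finset.mem_filter] at he'
    have heq : e' = (a.1, f1 a) := Prod.ext he'.2 he'2
    exact ⟨a.2, heq ▸ he'.1, hnot⟩
  have hM2spec : ∀ e ∈ M2, e.1 ∈ R ∧ e ∈ T ∧ e.2 ∈ NB T R := by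
    intro e he
    rw [hM2, Finset.mem_image] at he
    obtain ⟨b, _, rfl⟩ := he
    have h := hf2mem b
    rw [Finset.mem_image] at h
    obtain ⟨e', he', he'1⟩ := h
    rw [Finset.mem_filter] at he'
    have heq : e' = (f2 b, b.1) := Prod.ext he'1 he'.2.1
    exact ⟨heq ▸ he'.2.2, heq ▸ he'.1, b.2⟩
  have hdisjM : Disjoint M1 M2 := by
    refine Finset.disjoint_left.mpr fun e h1 h2 => ?_
    exact (hM1spec e h1).2.2 (hM2spec e h2).2.2
  have hM1card : M1.card = (X \ R).card := by
    rw [hM1, Finset.card_image_of_injective, Finset.card_attach]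
    intro a a' h
    exact Subtype.ext (congrArg Prod.fst h)
  have hM2card : M2.card = (NB T R).card := by
    rw [hM2, Finset.card_image_of_injective, Finset.card_attach]
    intro b b' h
    exact Subtype.ext (congrArg Prod.snd h)
  refine ⟨((X \ R).image Sum.inl) ∪ ((NB T R).image Sum.inr), M1 ∪ M2, ?_, ?_, ?_, ?_, ?_⟩
  · -- cover
    intro e heT
    by_cases h : e.1 ∈ R
    · exact Or.inr (Finset.mem_union_right _ (Finset.mem_image.mpr
        ⟨e.2, mem_NB.mpr ⟨e, heT, h, rfl⟩, rfl⟩))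
    · refine Or.inl (Finset.mem_union_left _ (Finset.mem_image.mpr
        ⟨e.1, Finset.mem_sdiff.mpr ⟨?_, h⟩, rfl⟩))
      exact Finset.mem_image.mpr ⟨e, heT, rfl⟩
  · -- subset of T
    intro e he
    rcases Finset.mem_union.mp he with h | h
    · exact (hM1spec e h).2.1
    · exact (hM2spec e h).2.1
  · -- injective on fst
    intro e he f hf hef
    rcases Finset.mem_union.mp he with h1 | h1 <;> rcases Finset.mem_union.mp hf with h2 | h2
    · rw [hM1, Finset.mem_image] at h1 h2
      obtain ⟨a, _, rfl⟩ := h1; obtain ⟨a', _, rfl⟩ := h2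
      have : a = a' := Subtype.ext hef
      rw [this]
    · exact absurd ((hM2spec f h2).1) ((Finset.mem_sdiff.mp (hef ▸ (hM1spec e h1).1)).2)
    · exact absurd ((hM2spec e h1).1) ((Finset.mem_sdiff.mp (hef ▸ (hM1spec f h2).1)).2)
    · rw [hM2, Finset.mem_image] at h1 h2
      obtain ⟨b, _, rfl⟩ := h1; obtain ⟨b', _, rfl⟩ := h2
      have : b = b' := hf2inj hef
      rw [this]
  · -- injective on snd
    intro e he f hf hef
    rcases Finset.mem_union.mp he with h1 | h1 <;> rcases Finset.mem_union.mp hf with h2 | h2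
    · rw [hM1, Finset.mem_image] at h1 h2
      obtain ⟨a, _, rfl⟩ := h1; obtain ⟨a', _, rfl⟩ := h2
      have : a = a' := hf1inj hef
      rw [this]
    · exact absurd (hef ▸ (hM2spec f h2).2.2) ((hM1spec e h1).2.2)
    · exact absurd (hef ▸ (hM2spec e h1).2.2) ((hM1spec f h2).2.2)
    · rw [hM2, Finset.mem_image] at h1 h2
      obtain ⟨b, _, rfl⟩ := h1; obtain ⟨b', _, rfl⟩ := h2
      have : b = b' := Subtype.ext hef
      rw [this]
  · -- cardinality
    calc (((X \ R).image Sum.inl) ∪ ((NB T R).image Sum.inr)).card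
        ≤ ((X \ R).image Sum.inl).card + ((NB T R).image Sum.inr).card :=
          Finset.card_union_le _ _
      _ ≤ (X \ R).card + (NB T R).card := by
          gcongr <;> exact Finset.card_image_le
      _ = (M1 ∪ M2).card := by
          rw [Finset.card_union_of_disjoint hdisjM, hM1card, hM2card]
theorem isPerfect_of_maps {V α β : Type*} [Fintype V] {G : SimpleGraph V}
    (φ : V → α) (ψ : V → β)
    (hadj : ∀ x y, G.Adj x y ↔ (φ x ≠ φ y ∧ ψ x ≠ ψ y)) : IsPerfect G := by
  classical
  intro A
  haveI : Fintype ↥A := Set.Finite.fintype A.toFinite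
  set T : Finset (α × β) := A.toFinset.image (fun v => (φ v, ψ v)) with hT
  obtain ⟨C, M, hcover, hMT, hinj1, hinj2, hCM⟩ := konig_cover_matching T
  -- the coloring function
  set col : ↥A → α ⊕ β := fun v =>
    if Sum.inl (φ v.1) ∈ C then Sum.inl (φ v.1) else Sum.inr (ψ v.1) with hcol
  have hcolmem : ∀ v : ↥A, col v ∈ C := by
    intro v
    rw [hcol]
    dsimp only
    split_ifs with h
    · exact h
    · rcases hcover (φ v.1, ψ v.1)
        (Finset.mem_image.mpr ⟨v.1, Set.mem_toFinset.mpr v.2, rfl⟩) with h' | h'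
      · exact absurd h' h
      · exact h'
  have hcolne : ∀ u v : ↥A, (SimpleGraph.induce A G).Adj u v → col u ≠ col v := by
    intro u v huv heq
    have hG : G.Adj u.1 v.1 := huv
    rw [hadj] at hG
    rw [hcol] at heq
    dsimp only at heq
    split_ifs at heq with h1 h2 h2 <;>
      first
        | exact hG.1 (Sum.inl.inj heq)
        | exact hG.2 (Sum.inr.inj heq)
        | exact Sum.inl_ne_inr heq
        | exact Sum.inr_ne_inl heq
  -- a clique of size M.card
  have hpre : ∀ e ∈ M, ∃ v : ↥A, (φ v.1, ψ v.1) = e := by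
    intro e he
    have := hMT he
    rw [hT, Finset.mem_image] at this
    obtain ⟨v, hv, hve⟩ := this
    exact ⟨⟨v, Set.mem_toFinset.mp hv⟩, hve⟩
  set pick : {e // e ∈ M} → ↥A := fun e => Classical.choose (hpre e.1 e.2) with hpickdef
  have hpick : ∀ e, (φ (pick e).1, ψ (pick e).1) = e.1 :=
    fun e => Classical.choose_spec (hpre e.1 e.2)
  set K : Finset ↥A := M.attach.image pick with hK
  have hKcard : K.card = M.card := by
    rw [hK, Finset.card_image_of_injective, Finset.card_attach]
    intro e e' h
    apply Subtype.ext
    rw [← hpick e, ← hpick e', h]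
  have hKclique : (SimpleGraph.induce A G).IsNClique M.card K := by
    constructor
    · intro u hu w hw huw
      rw [hK, Finset.coe_image, Set.mem_image] at hu hw
      obtain ⟨e, _, rfl⟩ := hu
      obtain ⟨e', _, rfl⟩ := hw
      have hee' : e.1 ≠ e'.1 := fun h => huw (by rw [Subtype.ext h])
      have h1 : e.1.1 ≠ e'.1.1 := fun h => hee' (hinj1 e.1 e.2 e'.1 e'.2 h)
      have h2 : e.1.2 ≠ e'.1.2 := fun h => hee' (hinj2 e.1 e.2 e'.1 e'.2 h)
      show G.Adj (pick e).1 (pick e').1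
      rw [hadj]
      constructor
      · intro h
        exact h1 (by rw [← congrArg Prod.fst (hpick e), ← congrArg Prod.fst (hpick e')]; exact h)
      · intro h
        exact h2 (by rw [← congrArg Prod.snd (hpick e), ← congrArg Prod.snd (hpick e')]; exact h)
    · exact hKcard
  -- every clique has size ≤ C.card
  have hcliquebd : ∀ s : Finset ↥A, (SimpleGraph.induce A G).IsClique s → s.card ≤ C.card := by
    intro s hs
    apply Finset.card_le_card_of_injOn col (fun v _ => hcolmem v)
    intro u hu w hw hcoluw
    by_contra hne
    exact hcolne u w (hs hu hw hne) hcoluw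
  -- chromatic number ≤ C.card
  have hcoloring : (SimpleGraph.induce A G).Coloring ↥C :=
    SimpleGraph.Coloring.mk (fun v => ⟨col v, hcolmem v⟩)
      (fun huv h => hcolne _ _ huv (congrArg Subtype.val h))
  have hcolorable : (SimpleGraph.induce A G).Colorable C.card := by
    have := hcoloring.colorable
    rwa [Fintype.card_coe] at this
  -- clique number = M.card
  have hclnum : (SimpleGraph.induce A G).cliqueNum = M.card := by
    apply le_antisymm
    · obtain ⟨s, hs⟩ := (SimpleGraph.induce A G).exists_isNClique_cliqueNum
      calc (SimpleGraph.induce A G).cliqueNum = s.card := hs.card_eq.symm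
        _ ≤ C.card := hcliquebd s hs.isClique
        _ ≤ M.card := hCM
    · rw [← hKcard]
      exact SimpleGraph.IsClique.card_le_cliqueNum (tc := hKclique.isClique)
  -- chromatic number = M.card
  rw [hclnum]
  apply le_antisymm
  · calc (SimpleGraph.induce A G).chromaticNumber ≤ (C.card : ℕ∞) :=
        hcolorable.chromaticNumber_le
      _ ≤ (M.card : ℕ∞) := by exact_mod_cast hCM
  · by_contra hlt
    rw [not_le] at hlt
    exact SimpleGraph.cliqueFree_of_chromaticNumber_lt hlt K hKclique

theorem unitary_perfect_of_homs {n p q : ℕ} [NeZero n]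
    (φ : ZMod n →+* ZMod p) (ψ : ZMod n →+* ZMod q)
    (hunit : ∀ u : ZMod n, IsUnit u ↔ (φ u ≠ 0 ∧ ψ u ≠ 0)) :
    IsPerfect (unitaryCayley n) := by
  apply isPerfect_of_maps (G := unitaryCayley n) (fun x => φ x) (fun x => ψ x)
  intro x y
  show (x ≠ y ∧ IsUnit (x - y)) ↔ _
  constructor
  · rintro ⟨hne, hu⟩
    rw [hunit, map_sub, map_sub, sub_ne_zero, sub_ne_zero] at hu
    exact hu
  · rintro ⟨h1, h2⟩
    refine ⟨fun h => h1 (by rw [h]), ?_⟩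
    rw [hunit, map_sub, map_sub, sub_ne_zero, sub_ne_zero]
    exact ⟨h1, h2⟩

theorem castHom_ne_zero_iff {n p : ℕ} [NeZero n] (hdvd : p ∣ n) (hp : p.Prime)
    (u : ZMod n) : ZMod.castHom hdvd (ZMod p) u ≠ 0 ↔ Nat.Coprime u.val p := by
  rw [ZMod.castHom_apply, ← ZMod.natCast_val, Ne, ZMod.natCast_eq_zero_iff,
    Nat.coprime_comm]
  exact (Nat.Prime.coprime_iff_not_dvd hp).symm

theorem isUnit_iff_coprime' {n : ℕ} [NeZero n] (u : ZMod n) :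
    IsUnit u ↔ Nat.Coprime u.val n := by
  conv_lhs => rw [show u = ((u.val : ℕ) : ZMod n) by
    rw [ZMod.natCast_val, ZMod.cast_id]]
  exact ZMod.isUnit_iff_coprime u.val n

/-- if `n = p^a` or `n = p^a * q^b` with `p < q` odd primes, then the
unitary Cayley graph on `ZMod n` is perfect. -/
theorem stmt_13 (n : ℕ)
    (h : (∃ p a : ℕ, p.Prime ∧ Odd p ∧ 0 < a ∧ n = p ^ a) ∨
         (∃ p q a b : ℕ, p.Prime ∧ q.Prime ∧ Odd p ∧ Odd q ∧ p < q ∧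
            0 < a ∧ 0 < b ∧ n = p ^ a * q ^ b)) :
    IsPerfect (unitaryCayley n) := by
  rcases h with ⟨p, a, hp, _, ha, rfl⟩ | ⟨p, q, a, b, hp, hq, _, _, _, ha, hb, rfl⟩
  · haveI : NeZero (p ^ a) := ⟨pow_ne_zero a hp.pos.ne'⟩
    have hdvd : p ∣ p ^ a := dvd_pow_self p ha.ne'
    refine unitary_perfect_of_homs (ZMod.castHom hdvd (ZMod p))
      (ZMod.castHom hdvd (ZMod p)) (fun u => ?_)
    rw [isUnit_iff_coprime', castHom_ne_zero_iff hdvd hp, and_self,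
      Nat.coprime_pow_right_iff ha]
  · haveI : NeZero (p ^ a * q ^ b) :=
      ⟨mul_ne_zero (pow_ne_zero a hp.pos.ne') (pow_ne_zero b hq.pos.ne')⟩
    have hdvdp : p ∣ p ^ a * q ^ b := (dvd_pow_self p ha.ne').mul_right _
    have hdvdq : q ∣ p ^ a * q ^ b := (dvd_pow_self q hb.ne').mul_left _
    refine unitary_perfect_of_homs (ZMod.castHom hdvdp (ZMod p))
      (ZMod.castHom hdvdq (ZMod q)) (fun u => ?_)
    rw [isUnit_iff_coprime', castHom_ne_zero_iff hdvdp hp, castHom_ne_zero_iff hdvdq hq,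
      Nat.coprime_mul_iff_right, Nat.coprime_pow_right_iff ha, Nat.coprime_pow_right_iff hb]
end

section
/- Let n be odd with at most two distinct prime divisors and least prime divisor p, and let G be the complement of the unitary Cayley graph on Z/nZ. Then ch(G) = χ(G) = n/p. -/
open Finset

section Galvin
attribute [local instance] Classical.propDecidable
variable {V α β : Type*} [DecidableEq V]

/-- Galvin-style superorientation of the "row-or-column" graph. -/
def Drel (r : V → α) (c : V → β) (φ : V → ℕ) (x y : V) : Prop :=
  x ≠ y ∧ ((r x = r y ∧ φ y < φ x) ∨ (c x = c y ∧ φ x < φ y))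

lemma kernel_exists (r : V → α) (c : V → β) (φ : V → ℕ)
    (hr : ∀ x y, r x = r y → φ x = φ y → x = y) (A : Finset V) :
    ∃ S : Finset V, S ⊆ A ∧ (∀ x ∈ S, ∀ y ∈ S, ¬ Drel r c φ x y) ∧
      ∀ v ∈ A, v ∉ S → ∃ s ∈ S, Drel r c φ v s := by
  induction A using Finset.strongInduction with
  | _ A ih =>
    by_cases hdel : ∃ v₀ ∈ A, (∀ u ∈ A, r u = r v₀ → φ v₀ ≤ φ u) ∧
        ∃ u ∈ A, u ≠ v₀ ∧ c u = c v₀ ∧ φ u < φ v₀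
    · obtain ⟨v₀, hv₀A, hmin, u, huA, hune, hcu, hφu⟩ := hdel
      obtain ⟨S, hSsub, hSind, hSabs⟩ := ih (A.erase u) (Finset.erase_ssubset huA)
      refine ⟨S, hSsub.trans (Finset.erase_subset _ _), hSind, ?_⟩
      intro v hvA hvS
      by_cases hvu : v = u
      · subst hvu
        by_cases hv₀S : v₀ ∈ S
        · exact ⟨v₀, hv₀S, hune, Or.inr ⟨hcu, hφu⟩⟩
        · have hv₀A' : v₀ ∈ A.erase v := Finset.mem_erase.2 ⟨fun h => hune h.symm, hv₀A⟩
          obtain ⟨s, hsS, hsne, hs⟩ := hSabs v₀ hv₀A' hv₀S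
          rcases hs with ⟨hrs, hlt⟩ | ⟨hcs, hlt⟩
          · exact absurd hlt (not_lt.2 (hmin s (Finset.mem_of_mem_erase (hSsub hsS)) hrs.symm))
          · refine ⟨s, hsS, ?_, Or.inr ⟨hcu.trans hcs, hφu.trans hlt⟩⟩
            rintro rfl; exact absurd (hφu.trans hlt) (lt_irrefl _)
      · exact hSabs v (Finset.mem_erase.2 ⟨hvu, hvA⟩) hvS
    · push_neg at hdel
      refine ⟨A.filter (fun v => ∀ u ∈ A, r u = r v → φ v ≤ φ u),
        Finset.filter_subset _ _, ?_, ?_⟩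
      · rintro x hx y hy ⟨hne, hD⟩
        obtain ⟨hxA, hxmin⟩ := Finset.mem_filter.1 hx
        obtain ⟨hyA, hymin⟩ := Finset.mem_filter.1 hy
        rcases hD with ⟨hrxy, hlt⟩ | ⟨hcxy, hlt⟩
        · exact absurd hlt (not_lt.2 (hxmin y hyA hrxy.symm))
        · exact absurd hlt (not_lt.2 (hdel y hyA hymin x hxA hne hcxy))
      · intro v hvA hvS
        obtain ⟨s, hsmem, hsmin⟩ := Finset.exists_min_image (A.filter (fun u => r u = r v)) φ
          ⟨v, Finset.mem_filter.2 ⟨hvA, rfl⟩⟩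
        obtain ⟨hsA, hsr⟩ := Finset.mem_filter.1 hsmem
        have hsS : s ∈ A.filter (fun w => ∀ u ∈ A, r u = r w → φ w ≤ φ u) := by
          refine Finset.mem_filter.2 ⟨hsA, fun u huA hur => ?_⟩
          exact hsmin u (Finset.mem_filter.2 ⟨huA, hur.trans hsr⟩)
        have hle : φ s ≤ φ v := hsmin v (Finset.mem_filter.2 ⟨hvA, rfl⟩)
        have hne : v ≠ s := by
          rintro rfl; exact hvS hsS
        have hlt : φ s < φ v := by
          rcases lt_or_eq_of_le hle with h | h
          · exact h
          · exact absurd (hr s v hsr (h.symm ▸ rfl)) (fun hh => hne hh.symm)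
        exact ⟨s, hsS, hne, Or.inl ⟨hsr.symm, hlt⟩⟩

lemma bbs (r : V → α) (c : V → β) (φ : V → ℕ)
    (hr : ∀ x y, r x = r y → φ x = φ y → x = y)
    (hc : ∀ x y, c x = c y → φ x = φ y → x = y) :
    ∀ (N : ℕ) (A : Finset V) (L : V → Finset ℕ),
      (∑ v ∈ A, (L v).card) ≤ N →
      (∀ v ∈ A, (A.filter (fun w => Drel r c φ v w)).card < (L v).card) →
      ∃ col : V → ℕ, (∀ v ∈ A, col v ∈ L v) ∧
        ∀ x ∈ A, ∀ y ∈ A, x ≠ y → (r x = r y ∨ c x = c y) → col x ≠ col y := by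
  intro N
  induction N with
  | zero =>
    intro A L hsum hdeg
    rcases A.eq_empty_or_nonempty with rfl | ⟨v₁, hv₁⟩
    · exact ⟨fun _ => 0, by simp, by simp⟩
    · exfalso
      have h1 : 1 ≤ (L v₁).card := Nat.lt_of_le_of_lt (Nat.zero_le _) (hdeg v₁ hv₁)
      have h2 : (L v₁).card ≤ ∑ v ∈ A, (L v).card :=
        Finset.single_le_sum (f := fun v => (L v).card) (fun i _ => Nat.zero_le _) hv₁
      omega
  | succ N ihN =>
    intro A L hsum hdeg
    rcases A.eq_empty_or_nonempty with rfl | ⟨v₁, hv₁⟩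
    · exact ⟨fun _ => 0, by simp, by simp⟩
    have hL₁ : (L v₁).Nonempty := Finset.card_pos.1 (Nat.lt_of_le_of_lt (Nat.zero_le _) (hdeg v₁ hv₁))
    obtain ⟨a, ha⟩ := hL₁
    set B : Finset V := A.filter (fun v => a ∈ L v) with hB
    have hv₁B : v₁ ∈ B := Finset.mem_filter.2 ⟨hv₁, ha⟩
    obtain ⟨S, hSB, hSind, hSabs⟩ := kernel_exists r c φ hr B
    have hSA : S ⊆ A := hSB.trans (Finset.filter_subset _ _)
    have hSne : S.Nonempty := by
      by_contra hS
      rw [Finset.not_nonempty_iff_eq_empty] at hS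
      obtain ⟨s, hs, -⟩ := hSabs v₁ hv₁B (by simp [hS])
      simp [hS] at hs
    set A' : Finset V := A \ S with hA'
    set L' : V → Finset ℕ := fun v => (L v).erase a with hL'
    have hsub' : A' ⊆ A := Finset.sdiff_subset
    -- sum bound
    have hsum' : (∑ v ∈ A', (L' v).card) ≤ N := by
      obtain ⟨s₀, hs₀⟩ := hSne
      have h0 : a ∈ L s₀ := (Finset.mem_filter.1 (hSB hs₀)).2
      have h1 : 1 ≤ (L s₀).card := Finset.card_pos.2 ⟨a, h0⟩
      have h2 : (∑ v ∈ A', (L v).card) + (∑ v ∈ S, (L v).card) = ∑ v ∈ A, (L v).card :=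
        Finset.sum_sdiff hSA
      have h3 : (L s₀).card ≤ ∑ v ∈ S, (L v).card :=
        Finset.single_le_sum (f := fun v => (L v).card) (fun i _ => Nat.zero_le _) hs₀
      have h4 : (∑ v ∈ A', (L' v).card) ≤ ∑ v ∈ A', (L v).card :=
        Finset.sum_le_sum (fun v _ => Finset.card_le_card (Finset.erase_subset _ _))
      omega
    -- degree bound
    have hdeg' : ∀ v ∈ A', (A'.filter (fun w => Drel r c φ v w)).card < (L' v).card := by
      intro v hv
      obtain ⟨hvA, hvS⟩ := Finset.mem_sdiff.1 hv
      by_cases hvB : v ∈ B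
      · obtain ⟨s, hsS, hDs⟩ := hSabs v hvB hvS
        have hsub2 : A'.filter (fun w => Drel r c φ v w) ⊆
            (A.filter (fun w => Drel r c φ v w)).erase s := by
          intro w hw
          obtain ⟨hwA', hwD⟩ := Finset.mem_filter.1 hw
          refine Finset.mem_erase.2 ⟨?_, Finset.mem_filter.2 ⟨hsub' hwA', hwD⟩⟩
          rintro rfl
          exact (Finset.mem_sdiff.1 hwA').2 hsS
        have hsmem : s ∈ A.filter (fun w => Drel r c φ v w) :=
          Finset.mem_filter.2 ⟨hSA hsS, hDs⟩
        have h5 : (A'.filter (fun w => Drel r c φ v w)).card ≤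
            (A.filter (fun w => Drel r c φ v w)).card - 1 := by
          calc _ ≤ ((A.filter (fun w => Drel r c φ v w)).erase s).card :=
                Finset.card_le_card hsub2
            _ = _ := Finset.card_erase_of_mem hsmem
        have h6 : 1 ≤ (A.filter (fun w => Drel r c φ v w)).card :=
          Finset.card_pos.2 ⟨s, hsmem⟩
        have h7 : a ∈ L v := (Finset.mem_filter.1 hvB).2
        have h8 : (L' v).card = (L v).card - 1 := Finset.card_erase_of_mem h7
        have h9 := hdeg v hvA
        omega
      · have h8 : L' v = L v := by
          have : a ∉ L v := fun hav => hvB (Finset.mem_filter.2 ⟨hvA, hav⟩)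
          simp [hL', Finset.erase_eq_of_notMem this]
        rw [h8]
        calc (A'.filter (fun w => Drel r c φ v w)).card
            ≤ (A.filter (fun w => Drel r c φ v w)).card :=
              Finset.card_le_card (Finset.filter_subset_filter _ hsub')
          _ < (L v).card := hdeg v hvA
    obtain ⟨col', hcol'mem, hcol'prop⟩ := ihN A' L' hsum' hdeg'
    refine ⟨fun v => if v ∈ S then a else col' v, ?_, ?_⟩
    · intro v hvA
      by_cases hvS : v ∈ S
      · simpa [hvS] using (Finset.mem_filter.1 (hSB hvS)).2
      · simp only [hvS, if_false]
        exact Finset.erase_subset _ _ (hcol'mem v (Finset.mem_sdiff.2 ⟨hvA, hvS⟩))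
    · intro x hx y hy hne hrc
      have hDrel : Drel r c φ x y ∨ Drel r c φ y x := by
        rcases hrc with h | h
        · have : φ x ≠ φ y := fun hφ => hne (hr x y h hφ)
          rcases this.lt_or_gt with hlt | hlt
          · exact Or.inr ⟨hne.symm, Or.inl ⟨h.symm, hlt⟩⟩
          · exact Or.inl ⟨hne, Or.inl ⟨h, hlt⟩⟩
        · have : φ x ≠ φ y := fun hφ => hne (hc x y h hφ)
          rcases this.lt_or_gt with hlt | hlt
          · exact Or.inl ⟨hne, Or.inr ⟨h, hlt⟩⟩
          · exact Or.inr ⟨hne.symm, Or.inr ⟨h.symm, hlt⟩⟩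
      by_cases hxS : x ∈ S <;> by_cases hyS : y ∈ S
      · exact absurd hDrel (by push_neg; exact ⟨hSind x hxS y hyS, hSind y hyS x hxS⟩)
      · have hy' : y ∈ A' := Finset.mem_sdiff.2 ⟨hy, hyS⟩
        have : col' y ∈ (L y).erase a := hcol'mem y hy'
        simp only [hxS, hyS, if_true, if_false]
        exact fun hEq => (Finset.ne_of_mem_erase this) hEq.symm
      · have hx' : x ∈ A' := Finset.mem_sdiff.2 ⟨hx, hxS⟩
        have : col' x ∈ (L x).erase a := hcol'mem x hx'
        simp only [hxS, hyS, if_true, if_false]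
        exact Finset.ne_of_mem_erase this
      · have hx' : x ∈ A' := Finset.mem_sdiff.2 ⟨hx, hxS⟩
        have hy' : y ∈ A' := Finset.mem_sdiff.2 ⟨hy, hyS⟩
        simp only [hxS, hyS, if_false]
        exact hcol'prop x hx' y hy' hne hrc


lemma choosable_abstract [Fintype V] (r : V → α) (c : V → β) (φ : V → ℕ) (k : ℕ)
    (hr : ∀ x y, r x = r y → φ x = φ y → x = y)
    (hc : ∀ x y, c x = c y → φ x = φ y → x = y)
    (hφk : ∀ v, φ v < k) (L : V → Finset ℕ) (hL : ∀ v, (L v).card = k) :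
    ∃ col : V → ℕ, (∀ v, col v ∈ L v) ∧
      ∀ x y : V, x ≠ y → (r x = r y ∨ c x = c y) → col x ≠ col y := by
  have hdeg : ∀ v ∈ (Finset.univ : Finset V),
      ((Finset.univ : Finset V).filter (fun w => Drel r c φ v w)).card < (L v).card := by
    intro v _
    have h1 : ((Finset.univ : Finset V).filter
        (fun w => r w = r v ∧ φ w < φ v)).card ≤ φ v := by
      have := Finset.card_le_card_of_injOn φ
        (s := (Finset.univ : Finset V).filter (fun w => r w = r v ∧ φ w < φ v))
        (t := Finset.range (φ v))
        (fun a haa => Finset.mem_range.2 (Finset.mem_filter.1 haa).2.2)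
        (fun a haa b hbb hab => by
          have ha' := Finset.mem_filter.1 (by exact_mod_cast haa)
          have hb' := Finset.mem_filter.1 (by exact_mod_cast hbb)
          exact hr a b (ha'.2.1.trans hb'.2.1.symm) hab)
      simpa using this
    have h2 : ((Finset.univ : Finset V).filter
        (fun w => c w = c v ∧ φ v < φ w)).card ≤ k - (φ v + 1) := by
      have := Finset.card_le_card_of_injOn φ
        (s := (Finset.univ : Finset V).filter (fun w => c w = c v ∧ φ v < φ w))
        (t := Finset.Ico (φ v + 1) k)
        (fun a haa => Finset.mem_Ico.2 ⟨(Finset.mem_filter.1 haa).2.2, hφk a⟩)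
        (fun a haa b hbb hab => by
          have ha' := Finset.mem_filter.1 (by exact_mod_cast haa)
          have hb' := Finset.mem_filter.1 (by exact_mod_cast hbb)
          exact hc a b (ha'.2.1.trans hb'.2.1.symm) hab)
      simpa using this
    have hsub : (Finset.univ : Finset V).filter (fun w => Drel r c φ v w) ⊆
        ((Finset.univ : Finset V).filter (fun w => r w = r v ∧ φ w < φ v)) ∪
        ((Finset.univ : Finset V).filter (fun w => c w = c v ∧ φ v < φ w)) := by
      intro w hw
      obtain ⟨-, -, hD⟩ := Finset.mem_filter.1 hw
      rcases hD with ⟨h, hlt⟩ | ⟨h, hlt⟩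
      · exact Finset.mem_union_left _ (Finset.mem_filter.2 ⟨Finset.mem_univ _, h.symm, hlt⟩)
      · exact Finset.mem_union_right _ (Finset.mem_filter.2 ⟨Finset.mem_univ _, h.symm, hlt⟩)
    have hcard := (Finset.card_le_card hsub).trans (Finset.card_union_le _ _)
    have hφv := hφk v
    rw [hL v]
    omega
  obtain ⟨col, hmem, hprop⟩ := bbs r c φ hr hc (∑ v ∈ (Finset.univ : Finset V), (L v).card)
    Finset.univ L le_rfl hdeg
  exact ⟨col, fun v => hmem v (Finset.mem_univ v),
    fun x y => hprop x (Finset.mem_univ x) y (Finset.mem_univ y)⟩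

end Galvin


lemma two_primes (n : ℕ) (hn : 1 < n) (hpf : n.primeFactors.card ≤ 2) :
    ∃ q, q.Prime ∧ q ∣ n ∧ n.minFac ≤ q ∧
      ∀ t, t.Prime → t ∣ n → t = n.minFac ∨ t = q := by
  by_cases h : ∃ t, t.Prime ∧ t ∣ n ∧ t ≠ n.minFac
  · obtain ⟨q, hq, hqd, hqne⟩ := h
    refine ⟨q, hq, hqd, Nat.minFac_le_of_dvd hq.two_le hqd, ?_⟩
    intro t ht htd
    by_contra hcon
    push_neg at hcon
    obtain ⟨ht1, ht2⟩ := hcon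
    have hsub : ({n.minFac, q, t} : Finset ℕ) ⊆ n.primeFactors := by
      intro x hx
      simp only [Finset.mem_insert, Finset.mem_singleton] at hx
      rcases hx with rfl | rfl | rfl
      · exact Nat.mem_primeFactors.2 ⟨Nat.minFac_prime (by omega), Nat.minFac_dvd n, by omega⟩
      · exact Nat.mem_primeFactors.2 ⟨hq, hqd, by omega⟩
      · exact Nat.mem_primeFactors.2 ⟨ht, htd, by omega⟩
    have hcard : ({n.minFac, q, t} : Finset ℕ).card = 3 := by
      have e1 : n.minFac ∉ ({q, t} : Finset ℕ) := by
        simp only [Finset.mem_insert, Finset.mem_singleton]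
        push_neg
        exact ⟨fun h => hqne h.symm, fun h => ht1 h.symm⟩
      have e2 : q ∉ ({t} : Finset ℕ) := by
        simp only [Finset.mem_singleton]
        exact fun h => ht2 h.symm
      rw [Finset.card_insert_of_notMem e1, Finset.card_insert_of_notMem e2,
        Finset.card_singleton]
    have := Finset.card_le_card hsub
    omega
  · push_neg at h
    exact ⟨n.minFac, Nat.minFac_prime (by omega), Nat.minFac_dvd n, le_refl _,
      fun t ht htd => Or.inl (h t ht htd)⟩



open SimpleGraph

variable {V : Type*}

/-- for odd `n > 1` with at most two distinct prime divisors, the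
complement of the unitary Cayley graph satisfies `ch(G) = χ(G) = n / p`. -/
theorem stmt_15 (n : ℕ) (hn : 1 < n) (hodd : Odd n)
    (hpf : n.primeFactors.card ≤ 2) :
    choiceNumber ((unitaryCayley n)ᶜ) = n / n.minFac ∧
      ((unitaryCayley n)ᶜ).chromaticNumber = ((n / n.minFac : ℕ) : ℕ∞) := by
  classical
  haveI : NeZero n := ⟨by omega⟩
  have hp : n.minFac.Prime := Nat.minFac_prime (by omega)
  set p := n.minFac with hpdef
  have hpd : p ∣ n := Nat.minFac_dvd n
  have hppos : 0 < p := hp.pos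
  obtain ⟨q, hq, hqd, hpq, hpq2⟩ := two_primes n hn hpf
  set k := n / p with hkdef
  have hkn : p * k = n := Nat.mul_div_cancel' hpd
  set r : ZMod n → ZMod p := fun x => (x.val : ZMod p) with hrdef
  set c : ZMod n → ZMod q := fun x => (x.val : ZMod q) with hcdef
  set φ : ZMod n → ℕ := fun x => x.val / p with hφdef
  have hr : ∀ x y : ZMod n, r x = r y → φ x = φ y → x = y := by
    intro x y hxy hfxy
    have h1 : x.val % p = y.val % p := (ZMod.natCast_eq_natCast_iff' _ _ _).1 hxy
    have h4 : x.val / p = y.val / p := hfxy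
    have h2 := Nat.div_add_mod x.val p
    have h3 := Nat.div_add_mod y.val p
    exact ZMod.val_injective n (by rw [← h2, ← h3, h4, h1])
  have hc : ∀ x y : ZMod n, c x = c y → φ x = φ y → x = y := by
    have key : ∀ x y : ZMod n, x.val ≤ y.val → c x = c y → φ x = φ y → x = y := by
      intro x y hle hxy hfxy
      have h1 : x.val % q = y.val % q := (ZMod.natCast_eq_natCast_iff' _ _ _).1 hxy
      have hdvd : q ∣ y.val - x.val := (Nat.modEq_iff_dvd' hle).1 h1
      have h4 : x.val / p = y.val / p := hfxy
      have h2 := Nat.div_add_mod x.val p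
      have h3 := Nat.div_add_mod y.val p
      rw [← h4] at h3
      have hm1 : x.val % p < p := Nat.mod_lt _ hppos
      have hm2 : y.val % p < p := Nat.mod_lt _ hppos
      have hdiff : y.val - x.val < p := by omega
      have h0 : y.val - x.val = 0 :=
        Nat.eq_zero_of_dvd_of_lt hdvd (lt_of_lt_of_le hdiff hpq)
      exact ZMod.val_injective n (by omega)
    intro x y hxy hfxy
    rcases le_total x.val y.val with h | h
    · exact key x y h hxy hfxy
    · exact (key y x h hxy.symm hfxy.symm).symm
  have hφk : ∀ v : ZMod n, φ v < k := fun v =>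
    Nat.div_lt_div_of_lt_of_dvd hpd (ZMod.val_lt v)
  have hcast : ∀ (t : ℕ) (htn : t ∣ n) (x y : ZMod n), t ∣ (x - y).val →
      ((x.val : ZMod t) = (y.val : ZMod t)) := by
    intro t htn x y hdvd
    have e : ∀ z : ZMod n, (z.val : ZMod t) = ZMod.castHom htn (ZMod t) z := by
      intro z
      rw [ZMod.natCast_val, ZMod.castHom_apply]
    have h0 : ZMod.castHom htn (ZMod t) (x - y) = 0 := by
      rw [← e (x - y)]
      exact (ZMod.natCast_eq_zero_iff _ _).2 hdvd
    rw [map_sub] at h0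
    rw [e x, e y]
    exact sub_eq_zero.1 h0
  have hadj : ∀ x y : ZMod n, ((unitaryCayley n)ᶜ).Adj x y →
      x ≠ y ∧ (r x = r y ∨ c x = c y) := by
    intro x y hxyadj
    rw [SimpleGraph.compl_adj] at hxyadj
    obtain ⟨hne, hnadj⟩ := hxyadj
    have hnu : ¬ IsUnit (x - y) := fun h => hnadj ⟨hne, h⟩
    refine ⟨hne, ?_⟩
    have hz0 : x - y ≠ 0 := sub_ne_zero.2 hne
    have hzval : (x - y).val ≠ 0 := fun h => hz0 ((ZMod.val_eq_zero (x - y)).1 h)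
    have hcop : ¬ Nat.Coprime (x - y).val n := by
      intro h
      apply hnu
      have := (ZMod.isUnit_iff_coprime (x - y).val n).2 h
      rwa [ZMod.natCast_zmod_val] at this
    have hdne : Nat.gcd (x - y).val n ≠ 1 := hcop
    have htp : (Nat.gcd (x - y).val n).minFac.Prime := Nat.minFac_prime hdne
    have htz : (Nat.gcd (x - y).val n).minFac ∣ (x - y).val :=
      (Nat.minFac_dvd _).trans (Nat.gcd_dvd_left _ _)
    have htn : (Nat.gcd (x - y).val n).minFac ∣ n :=
      (Nat.minFac_dvd _).trans (Nat.gcd_dvd_right _ _)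
    rcases hpq2 _ htp htn with h | h
    · exact Or.inl (hcast p hpd x y (by rw [hpdef, ← h]; exact htz))
    · exact Or.inr (hcast q hqd x y (by rw [← h]; exact htz))
  -- the clique of multiples of p
  set e : Fin k → ZMod n := fun i => ((p * (i : ℕ) : ℕ) : ZMod n) with hedef
  have hlt' : ∀ i : Fin k, p * (i : ℕ) < n := by
    intro i
    calc p * (i : ℕ) < p * k := (Nat.mul_lt_mul_left hppos).2 i.isLt
      _ = n := hkn
  have heval : ∀ i, (e i).val = p * (i : ℕ) := fun i => ZMod.val_cast_of_lt (hlt' i)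
  have heinj : Function.Injective e := by
    intro i j h
    have := congrArg ZMod.val h
    rw [heval, heval] at this
    exact Fin.ext (Nat.eq_of_mul_eq_mul_left hppos this)
  have headj : ∀ i j, i ≠ j → ((unitaryCayley n)ᶜ).Adj (e i) (e j) := by
    intro i j hij
    rw [SimpleGraph.compl_adj]
    refine ⟨fun h => hij (heinj h), ?_⟩
    rintro ⟨-, hu⟩
    haveI : Fact (1 < p) := ⟨hp.one_lt⟩
    have hmap := hu.map (ZMod.castHom hpd (ZMod p))
    have hcast0 : ∀ i : Fin k, (ZMod.castHom hpd (ZMod p)) (e i) = 0 := by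
      intro i
      have hei : e i = ((p * (i : ℕ) : ℕ) : ZMod n) := rfl
      rw [hei, map_natCast, Nat.cast_mul, ZMod.natCast_self, zero_mul]
    rw [map_sub, hcast0 i, hcast0 j, sub_zero] at hmap
    exact zero_ne_one (isUnit_zero_iff.1 hmap)
  set s : Finset (ZMod n) := Finset.univ.image e with hsdef
  have hscard : s.card = k := by
    rw [hsdef, Finset.card_image_of_injective _ heinj, Finset.card_univ, Fintype.card_fin]
  have hclique : ((unitaryCayley n)ᶜ).IsClique (s : Set (ZMod n)) := by
    intro a ha b hb hab
    simp only [hsdef, Finset.coe_image, Set.mem_image, Finset.coe_univ, Set.image_univ,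
      Set.mem_range] at ha hb
    obtain ⟨i, rfl⟩ := ha
    obtain ⟨j, rfl⟩ := hb
    exact headj i j (fun h => hab (congrArg e h))
  -- proper coloring with k colors
  have hproper : ∀ x y : ZMod n, ((unitaryCayley n)ᶜ).Adj x y → φ x ≠ φ y := by
    intro x y hxy hphi
    obtain ⟨hne, h | h⟩ := hadj x y hxy
    · exact hne (hr x y h hphi)
    · exact hne (hc x y h hphi)
  have hcolorable : ((unitaryCayley n)ᶜ).Colorable k :=
    ⟨SimpleGraph.Coloring.mk (fun v => ⟨φ v, hφk v⟩)
      (fun {x y} hxy h => hproper x y hxy (congrArg Fin.val h))⟩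
  -- choosability
  have hchoos : Choosable ((unitaryCayley n)ᶜ) k := by
    intro L hL
    obtain ⟨col, hmem, hprop⟩ := choosable_abstract r c φ k hr hc hφk L hL
    refine ⟨col, hmem, fun x y hxy => ?_⟩
    obtain ⟨hne, hrc⟩ := hadj x y hxy
    exact hprop x y hne hrc
  have hlower : ∀ m ∈ {m : ℕ | Choosable ((unitaryCayley n)ᶜ) m}, k ≤ m := by
    intro m hm
    obtain ⟨col, hmem, hprop⟩ := hm (fun _ => Finset.range m) (fun _ => Finset.card_range m)
    have hcolm : ∀ v, col v < m := fun v => Finset.mem_range.1 (hmem v)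
    have hcolorm : ((unitaryCayley n)ᶜ).Colorable m :=
      ⟨SimpleGraph.Coloring.mk (fun v => ⟨col v, hcolm v⟩)
        (fun {x y} hxy h => hprop hxy (congrArg Fin.val h))⟩
    have := hclique.card_le_of_colorable hcolorm
    rwa [hscard] at this
  constructor
  · unfold choiceNumber
    refine le_antisymm (Nat.sInf_le hchoos) (le_csInf ⟨k, hchoos⟩ hlower)
  · refine le_antisymm hcolorable.chromaticNumber_le ?_
    have := hclique.card_le_chromaticNumber
    rwa [hscard] at this
end
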